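/- Let F be a field. Then the polynomial ring F[X] is locally Egyptian (although it is not Egyptian): the elements X and 1 − X generate the unit ideal of F[X], and both localizations F[X][1/X] and F[X][1/(1−X)] are Egyptian. -/

import Mathlib

universe u

/-- A commutative ring `D` is *Egyptian* if every nonzero `d : D` is a sum of reciprocals
`d = 1/d₁ + ⋯ + 1/dₙ` of finitely many pairwise distinct nonzero elements `dᵢ` of `D`, the
equality holding in any field in which `D` embeds.  (For an integral domain `D` this is
equivalent to the usual definition, in which the equality is required in the fraction field
of `D`: such an equality holds in one field containing `D` iff it holds in all of them.) -/
def IsEgyptian (D : Type u) [CommRing D] : Prop :=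
  ∀ d : D, d ≠ 0 → ∃ s : Finset D, (∀ i ∈ s, i ≠ 0) ∧
    ∀ (K : Type u) [Field K] (φ : D →+* K), Function.Injective φ →
      φ d = ∑ i ∈ s, (φ i)⁻¹

/-- A domain `D` is *generically Egyptian* if `D[1/f]` is Egyptian for some nonzero `f : D`. -/
def IsGenericallyEgyptian (D : Type u) [CommRing D] : Prop :=
  ∃ f : D, f ≠ 0 ∧ IsEgyptian (Localization.Away f)

/-- A domain `D` is *locally Egyptian* if there is a finite set of generators of the unit
ideal of `D` such that inverting any one of them yields an Egyptian ring. -/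
def IsLocallyEgyptian (D : Type u) [CommRing D] : Prop :=
  ∃ s : Finset D, Ideal.span (s : Set D) = ⊤ ∧
    ∀ f ∈ s, IsEgyptian (Localization.Away f)

open Polynomial

lemma isEgyptian_of_ringEquiv {D D' : Type u} [CommRing D] [CommRing D'] (e : D ≃+* D')
    (h : IsEgyptian D) : IsEgyptian D' := by
  classical
  intro d hd
  obtain ⟨s, hs0, hs⟩ := h (e.symm d) (by
    intro h0
    apply hd
    have := congrArg e h0
    simpa using this)
  refine ⟨s.image e, ?_, ?_⟩
  · intro i hi
    obtain ⟨j, hj, rfl⟩ := Finset.mem_image.mp hi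
    intro h0
    exact hs0 j hj (by simpa using congrArg e.symm h0)
  · intro K _ φ hφ
    have := hs K (φ.comp e.toRingHom) (hφ.comp e.injective)
    rw [Finset.sum_image (fun a _ b _ hab => e.injective hab)]
    simpa using this

lemma egyptianAwayX (F : Type u) [Field F] : IsEgyptian (Localization.Away (X : F[X])) := by
  classical
  set R := Localization.Away (X : F[X]) with hR
  have hXne : (X : F[X]) ≠ 0 := X_ne_zero
  have hle : Submonoid.powers (X : F[X]) ≤ nonZeroDivisors F[X] :=
    powers_le_nonZeroDivisors_of_noZeroDivisors hXne
  haveI : IsDomain R := IsLocalization.isDomain_of_le_nonZeroDivisors (S := R) hle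
  have hinj : Function.Injective (algebraMap F[X] R) := IsLocalization.injective R hle
  have hu : IsUnit (algebraMap F[X] R X) :=
    IsLocalization.map_units R (⟨X, Submonoid.mem_powers X⟩ : Submonoid.powers (X : F[X]))
  set u : Rˣ := hu.unit with hu_def
  have huval : (u : R) = algebraMap F[X] R X := hu.unit_spec
  -- coercion of integer powers of u with nonneg exponents
  have hupow : ∀ m : ℕ, ((u ^ (m : ℤ) : Rˣ) : R) = algebraMap F[X] R (X ^ m) := by
    intro m
    rw [zpow_natCast, Units.val_pow_eq_pow_val, huval, map_pow]
  intro d hd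
  obtain ⟨⟨p, m⟩, hpm⟩ := IsLocalization.surj (Submonoid.powers (X : F[X])) d
  obtain ⟨n, hn⟩ := m.2
  simp only at hpm
  rw [← hn] at hpm
  have hp : p ≠ 0 := by
    intro h0
    apply hd
    rw [h0, map_zero] at hpm
    have := (IsLocalization.map_units R (⟨X ^ n, ⟨n, rfl⟩⟩ : Submonoid.powers (X : F[X])))
    exact (this.mul_left_eq_zero).mp hpm
  set M := p.natDegree with hM
  set ε : ℕ → R := fun k =>
    algebraMap F[X] R (C (p.coeff k)⁻¹) * ((u ^ ((n : ℤ) - k) : Rˣ) : R) with hε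
  have hεval : ∀ k, k ∈ p.support →
      ε k * ((u ^ (M : ℤ) : Rˣ) : R) = algebraMap F[X] R (C (p.coeff k)⁻¹ * X ^ (n + M - k)) := by
    intro k hk
    have hkM : k ≤ M := le_natDegree_of_mem_supp k hk
    have : ε k * ((u ^ (M : ℤ) : Rˣ) : R)
        = algebraMap F[X] R (C (p.coeff k)⁻¹) * ((u ^ ((n : ℤ) - k + M) : Rˣ) : R) := by
      rw [hε]
      push_cast
      rw [mul_assoc, ← Units.val_mul, ← zpow_add]
    rw [this]
    have hexp : ((n : ℤ) - k + M) = ((n + M - k : ℕ) : ℤ) := by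
      push_cast [Nat.cast_sub (le_trans hkM (Nat.le_add_left M n))]
      omega
    rw [hexp, hupow, map_mul]
  have hεinj : ∀ k ∈ p.support, ∀ j ∈ p.support, ε k = ε j → k = j := by
    intro k hk j hj hkj
    have h1 := hεval k hk
    have h2 := hεval j hj
    rw [hkj] at h1
    have := hinj (h1.symm.trans h2)
    have hck : (p.coeff k)⁻¹ ≠ 0 := inv_ne_zero (mem_support_iff.mp hk)
    have hcj : (p.coeff j)⁻¹ ≠ 0 := inv_ne_zero (mem_support_iff.mp hj)
    have hdeg := congrArg natDegree this
    rw [natDegree_C_mul_X_pow _ _ hck, natDegree_C_mul_X_pow _ _ hcj] at hdeg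
    have hkM : k ≤ M := le_natDegree_of_mem_supp k hk
    have hjM : j ≤ M := le_natDegree_of_mem_supp j hj
    omega
  refine ⟨p.support.image ε, ?_, ?_⟩
  · intro i hi
    obtain ⟨k, hk, rfl⟩ := Finset.mem_image.mp hi
    have hck : C (p.coeff k)⁻¹ ≠ 0 := by
      simpa using inv_ne_zero (mem_support_iff.mp hk)
    have : algebraMap F[X] R (C (p.coeff k)⁻¹) ≠ 0 := by
      intro h0
      exact hck (hinj (by rw [h0, map_zero]))
    rw [hε]
    simp only
    exact mul_ne_zero this (Units.ne_zero _)
  · intro K _ φ hφ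
    set ψ : F[X] →+* K := φ.comp (algebraMap F[X] R) with hψ
    set x : K := ψ X with hx_def
    have hφu : φ ((u : Rˣ) : R) = x := by
      rw [huval]; rfl
    have hx : x ≠ 0 := by
      intro h0
      have : ((u : Rˣ) : R) = 0 := hφ (by rw [hφu, h0, map_zero])
      exact (Units.ne_zero u) this
    have hφzpow : ∀ z : ℤ, φ ((u ^ z : Rˣ) : R) = x ^ z := by
      intro z
      calc φ ((u ^ z : Rˣ) : R)
          = ((Units.map (φ : R →* K) (u ^ z) : Kˣ) : K) := (Units.coe_map _ _).symm
        _ = ((Units.map (φ : R →* K) u ^ z : Kˣ) : K) := by rw [map_zpow]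
        _ = ((Units.map (φ : R →* K) u : Kˣ) : K) ^ z := Units.val_zpow_eq_zpow_val _ _
        _ = x ^ z := by rw [Units.coe_map]; exact congrArg (· ^ z) hφu
    have hinvC : ∀ k ∈ p.support, (ψ (C (p.coeff k)⁻¹))⁻¹ = ψ (C (p.coeff k)) := by
      intro k hk
      have hck : p.coeff k ≠ 0 := mem_support_iff.mp hk
      have h1 : ψ (C (p.coeff k)⁻¹) * ψ (C (p.coeff k)) = 1 := by
        rw [← map_mul, ← C_mul, inv_mul_cancel₀ hck, map_one, map_one]
      exact inv_eq_of_mul_eq_one_right h1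
    have hterm : ∀ k ∈ p.support,
        (φ (ε k))⁻¹ = ψ (C (p.coeff k)) * x ^ ((k : ℤ) - n) := by
      intro k hk
      have : φ (ε k) = ψ (C (p.coeff k)⁻¹) * x ^ ((n : ℤ) - k) := by
        rw [hε]
        simp only [map_mul, hφzpow]
        rfl
      rw [this, mul_inv, hinvC k hk, ← zpow_neg, neg_sub]
    rw [Finset.sum_image (fun a ha b hb hab => hεinj a ha b hb hab)]
    rw [Finset.sum_congr rfl hterm]
    -- now compute φ d
    have hψp : ψ p = ∑ k ∈ p.support, ψ (C (p.coeff k)) * x ^ k := by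
      conv_lhs => rw [p.as_sum_support]
      rw [map_sum]
      refine Finset.sum_congr rfl fun k hk => ?_
      rw [← C_mul_X_pow_eq_monomial, map_mul, map_pow]
    have hd' : φ d * x ^ n = ψ p := by
      have h1 : φ (d * algebraMap F[X] R (X ^ n)) = φ (algebraMap F[X] R p) := congrArg φ hpm
      rw [map_mul] at h1
      rw [show x ^ n = φ (algebraMap F[X] R (X ^ n)) by
        rw [hx_def, hψ, map_pow, RingHom.comp_apply, ← map_pow, ← map_pow]]
      exact h1
    have hxn : x ^ n ≠ 0 := pow_ne_zero _ hx
    rw [eq_comm]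
    calc ∑ k ∈ p.support, ψ (C (p.coeff k)) * x ^ ((k : ℤ) - n)
        = ∑ k ∈ p.support, ψ (C (p.coeff k)) * x ^ k / x ^ n := by
          refine Finset.sum_congr rfl fun k hk => ?_
          rw [zpow_sub₀ hx, zpow_natCast, zpow_natCast, mul_div_assoc]
      _ = (∑ k ∈ p.support, ψ (C (p.coeff k)) * x ^ k) / x ^ n := by
          rw [Finset.sum_div]
      _ = ψ p / x ^ n := by rw [hψp]
      _ = φ d := by rw [← hd']; field_simp

lemma sumRec_intDegree (F : Type u) [Field F] (s : Finset F[X]) (h : ∀ i ∈ s, i ≠ 0) :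
    (∑ i ∈ s, ((algebraMap F[X] (RatFunc F)) i)⁻¹).intDegree ≤ 0 := by
  classical
  induction s using Finset.induction_on with
  | empty => simp [RatFunc.intDegree_zero]
  | @insert a s ha ih =>
    rw [Finset.sum_insert ha]
    have hane : (algebraMap F[X] (RatFunc F)) a ≠ 0 :=
      RatFunc.algebraMap_ne_zero (h a (Finset.mem_insert_self a s))
    have hinva : (((algebraMap F[X] (RatFunc F)) a)⁻¹).intDegree ≤ 0 := by
      have h1 : ((algebraMap F[X] (RatFunc F)) a).intDegree = a.natDegree :=
        RatFunc.intDegree_polynomial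
      have h2 : ((algebraMap F[X] (RatFunc F)) a) * ((algebraMap F[X] (RatFunc F)) a)⁻¹ = 1 :=
        mul_inv_cancel₀ hane
      have h3 := RatFunc.intDegree_mul hane (inv_ne_zero hane)
      rw [h2, RatFunc.intDegree_one] at h3
      omega
    have ih' := ih (fun i hi => h i (Finset.mem_insert_of_mem hi))
    set y := ∑ i ∈ s, ((algebraMap F[X] (RatFunc F)) i)⁻¹ with hy_def
    by_cases hy : y = 0
    · simpa [hy] using hinva
    by_cases hxy : ((algebraMap F[X] (RatFunc F)) a)⁻¹ + y = 0
    · rw [hxy, RatFunc.intDegree_zero]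
    exact le_trans (RatFunc.intDegree_add_le hy hxy) (max_le hinva ih')

lemma notEgyptianPoly (F : Type u) [Field F] : ¬ IsEgyptian (Polynomial F) := by
  intro h
  obtain ⟨s, hs0, hs⟩ := h X X_ne_zero
  have hinj : Function.Injective (algebraMap F[X] (RatFunc F)) :=
    RatFunc.algebraMap_injective F
  have heq := hs (RatFunc F) (algebraMap F[X] (RatFunc F)) hinj
  have h1 : ((algebraMap F[X] (RatFunc F)) X).intDegree = 1 := by
    rw [RatFunc.algebraMap_X, RatFunc.intDegree_X]
  have h2 := sumRec_intDegree F s hs0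
  rw [← heq, h1] at h2
  omega

noncomputable def tauHom (F : Type u) [Field F] : F[X] →ₐ[F] F[X] := aeval (1 - X)

lemma tauHom_invol (F : Type u) [Field F] : (tauHom F).comp (tauHom F) = AlgHom.id F F[X] := by
  apply Polynomial.algHom_ext
  simp [tauHom]

noncomputable def tau (F : Type u) [Field F] : F[X] ≃+* F[X] :=
  (AlgEquiv.ofAlgHom (tauHom F) (tauHom F) (tauHom_invol F) (tauHom_invol F)).toRingEquiv

lemma tau_X (F : Type u) [Field F] : tau F X = 1 - X := by
  simp [tau, tauHom]

lemma egyptianAwayOneSubX (F : Type u) [Field F] :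
    IsEgyptian (Localization.Away (1 - X : F[X])) := by
  have H : (Submonoid.powers (X : F[X])).map (tau F).toMonoidHom
      = Submonoid.powers (1 - X : F[X]) := by
    rw [Submonoid.map_powers]
    congr 1
    exact tau_X F
  exact isEgyptian_of_ringEquiv
    (IsLocalization.ringEquivOfRingEquiv (Localization.Away (X : F[X]))
      (Localization.Away (1 - X : F[X])) (tau F) H) (egyptianAwayX F)

lemma spanXOneSubX (F : Type u) [Field F] :
    Ideal.span {(X : F[X]), 1 - X} = ⊤ := by
  rw [Ideal.eq_top_iff_one]
  have h1 : (X : F[X]) ∈ Ideal.span {(X : F[X]), 1 - X} :=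
    Ideal.subset_span (Set.mem_insert _ _)
  have h2 : (1 - X : F[X]) ∈ Ideal.span {(X : F[X]), 1 - X} :=
    Ideal.subset_span (Set.mem_insert_of_mem _ rfl)
  have h3 := Ideal.add_mem _ h1 h2
  convert h3 using 2
  ring


/-- For any field `F`, the polynomial ring `F[X]` is locally Egyptian although it is not
Egyptian: the elements `X` and `1 - X` generate the unit ideal of `F[X]`, and both
localizations `F[X][1/X]` and `F[X][1/(1-X)]` are Egyptian. -/
theorem statement18 (F : Type u) [Field F] :
    IsLocallyEgyptian (Polynomial F) ∧ ¬ IsEgyptian (Polynomial F) ∧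
    Ideal.span {(Polynomial.X : Polynomial F), 1 - Polynomial.X} = ⊤ ∧
    IsEgyptian (Localization.Away (Polynomial.X : Polynomial F)) ∧
    IsEgyptian (Localization.Away (1 - Polynomial.X : Polynomial F)) := by
  classical
  refine ⟨⟨{X, 1 - X}, ?_, ?_⟩, notEgyptianPoly F, spanXOneSubX F,
    egyptianAwayX F, egyptianAwayOneSubX F⟩
  · rw [show (({X, 1 - X} : Finset F[X]) : Set F[X]) = {(X : F[X]), 1 - X} by simp]
    exact spanXOneSubX F
  · intro f hf
    rcases Finset.mem_insert.mp hf with h | h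
    · rw [h]; exact egyptianAwayX F
    · rw [Finset.mem_singleton.mp h]; exact egyptianAwayOneSubX F
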